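/- arXiv:1901.04272 — 3 statements merged into one kernel-verified Lean document; each statement's English description precedes it below -/
import Mathlib

section
/- For all real numbers Θ > 1, O ≥ 0 and p ≥ 0, we have min{O + p, 2O − (2/Θ)·p} ≤ (1 + Θ/(Θ+2))·O. -/
theorem stmt_0 (Θ O p : ℝ) (hΘ : 1 < Θ) (hO : 0 ≤ O) (hp : 0 ≤ p) :
    min (O + p) (2 * O - (2 / Θ) * p) ≤ (1 + Θ / (Θ + 2)) * O := by
  have hΘ0 : (0:ℝ) < Θ := by linarith
  have h2 : (0:ℝ) < Θ + 2 := by linarith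
  rcases le_or_gt p (Θ / (Θ + 2) * O) with h | h
  · calc min (O + p) (2 * O - (2 / Θ) * p) ≤ O + p := min_le_left _ _
      _ ≤ (1 + Θ / (Θ + 2)) * O := by nlinarith
  · have h' : Θ * O < p * (Θ + 2) := by
      rw [div_mul_eq_mul_div, div_lt_iff₀ h2] at h; linarith
    calc min (O + p) (2 * O - (2 / Θ) * p) ≤ 2 * O - (2 / Θ) * p := min_le_right _ _
      _ ≤ (1 + Θ / (Θ + 2)) * O := by
        rw [div_mul_eq_mul_div, sub_le_iff_le_add, ← sub_le_iff_le_add',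
          show 2 * O - (1 + Θ / (Θ + 2)) * O = 2 * O / (Θ + 2) by field_simp; ring,
          div_le_div_iff₀ h2 hΘ0]
        nlinarith
end

section
/- There exists a unique real number Θ* > 1 such that (2Θ*² + 2Θ*)/(Θ*² + Θ* − 2) = Θ* + 1 − (Θ*−1)/(3Θ*+3), and this Θ* satisfies 2 < Θ* < (1+√13)/2. -/
private lemma key_eq (Θ : ℝ) (h : 1 < Θ) :
    (2 * Θ ^ 2 + 2 * Θ) / (Θ ^ 2 + Θ - 2) = Θ + 1 - (Θ - 1) / (3 * Θ + 3) ↔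
    3 * Θ ^ 4 + 2 * Θ ^ 3 - 9 * Θ ^ 2 - 12 * Θ - 8 = 0 := by
  have h1 : Θ ^ 2 + Θ - 2 ≠ 0 := by nlinarith
  have h2 : 3 * Θ + 3 ≠ 0 := by nlinarith
  have h1' : Θ * (Θ + 1) - 2 ≠ 0 := by nlinarith
  constructor
  · intro H
    field_simp at H
    linear_combination -H
  · intro H
    field_simp
    linear_combination -H

private lemma bounds (Θ : ℝ) (h : 1 < Θ)
    (H : 3 * Θ ^ 4 + 2 * Θ ^ 3 - 9 * Θ ^ 2 - 12 * Θ - 8 = 0) :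
    2 < Θ ∧ Θ < (1 + Real.sqrt 13) / 2 := by
  have hs : Real.sqrt 13 ^ 2 = 13 := Real.sq_sqrt (by norm_num)
  have hs3 : 3 < Real.sqrt 13 := by
    nlinarith [Real.sqrt_nonneg 13]
  have h2 : 2 < Θ := by
    by_contra hc
    push_neg at hc
    nlinarith [sq_nonneg (Θ - 1), sq_nonneg (Θ - 2), mul_nonneg (sub_nonneg.2 hc) (le_of_lt (lt_trans one_pos h)), sq_nonneg Θ]
  refine ⟨h2, ?_⟩
  by_contra hc
  push_neg at hc
  have ht : Θ ^ 2 - Θ - 3 ≥ 0 := by nlinarith [Real.sqrt_nonneg 13]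
  nlinarith [sq_nonneg Θ, mul_nonneg ht (sq_nonneg Θ), mul_nonneg ht (le_of_lt (lt_trans one_pos h))]

theorem stmt_5 :
    (∃! Θ : ℝ, 1 < Θ ∧
      (2 * Θ ^ 2 + 2 * Θ) / (Θ ^ 2 + Θ - 2) = Θ + 1 - (Θ - 1) / (3 * Θ + 3)) ∧
    (∀ Θ : ℝ, 1 < Θ →
      (2 * Θ ^ 2 + 2 * Θ) / (Θ ^ 2 + Θ - 2) = Θ + 1 - (Θ - 1) / (3 * Θ + 3) →
      2 < Θ ∧ Θ < (1 + Real.sqrt 13) / 2) := by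
  have hs : Real.sqrt 13 ^ 2 = 13 := Real.sq_sqrt (by norm_num)
  have hs3 : 3 < Real.sqrt 13 := by nlinarith [Real.sqrt_nonneg 13]
  set u : ℝ := (1 + Real.sqrt 13) / 2 with hu
  have hu2 : 2 < u := by rw [hu]; nlinarith
  -- existence of a root of the polynomial via IVT
  have hcont : ContinuousOn (fun t : ℝ => 3 * t ^ 4 + 2 * t ^ 3 - 9 * t ^ 2 - 12 * t - 8)
      (Set.Icc 2 u) := by fun_prop
  have hmem : (0 : ℝ) ∈ Set.Icc (3 * (2:ℝ) ^ 4 + 2 * 2 ^ 3 - 9 * 2 ^ 2 - 12 * 2 - 8)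
      (3 * u ^ 4 + 2 * u ^ 3 - 9 * u ^ 2 - 12 * u - 8) := by
    constructor
    · norm_num
    · rw [hu]; nlinarith
  obtain ⟨c, hcmem, hc⟩ := intermediate_value_Icc (le_of_lt hu2) hcont hmem
  have hc1 : 1 < c := by linarith [hcmem.1]
  constructor
  · refine ⟨c, ⟨hc1, (key_eq c hc1).2 hc⟩, ?_⟩
    rintro b ⟨hb1, hbe⟩
    have hb := (key_eq b hb1).1 hbe
    have hbb := bounds b hb1 hb
    have hcb := bounds c hc1 hc
    have hb2 : 2 < b := hbb.1
    have hc2 : 2 < c := hcb.1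
    have hS : 0 < 3 * (b ^ 3 + b ^ 2 * c + b * c ^ 2 + c ^ 3) +
        2 * (b ^ 2 + b * c + c ^ 2) - 9 * (b + c) - 12 := by
      nlinarith [mul_pos (sub_pos.2 hb2) (sub_pos.2 hc2), sq_nonneg (b - 2), sq_nonneg (c - 2),
        mul_pos (mul_pos (sub_pos.2 hb2) (sub_pos.2 hc2)) (sub_pos.2 hc2),
        mul_pos (mul_pos (sub_pos.2 hb2) (sub_pos.2 hc2)) (sub_pos.2 hb2)]
    have hfac : (b - c) * (3 * (b ^ 3 + b ^ 2 * c + b * c ^ 2 + c ^ 3) +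
        2 * (b ^ 2 + b * c + c ^ 2) - 9 * (b + c) - 12) = 0 := by
      linear_combination hb - hc
    rcases mul_eq_zero.1 hfac with h0 | h0
    · exact sub_eq_zero.1 h0
    · linarith
  · intro Θ h1 he
    exact bounds Θ h1 ((key_eq Θ h1).1 he)
end

section
/- Let Θ* be the unique real number greater than 1 solving (2Θ²+2Θ)/(Θ²+Θ−2) = Θ+1−(Θ−1)/(3Θ+3). Then ρ* := (2Θ*²+2Θ*)/(Θ*²+Θ*−2) satisfies 2.93 < ρ* < 2.94. -/
theorem stmt_7 (Θs : ℝ) (hΘs : 1 < Θs)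
    (heq : (2 * Θs ^ 2 + 2 * Θs) / (Θs ^ 2 + Θs - 2) = Θs + 1 - (Θs - 1) / (3 * Θs + 3))
    (huniq : ∀ Θ : ℝ, 1 < Θ →
      (2 * Θ ^ 2 + 2 * Θ) / (Θ ^ 2 + Θ - 2) = Θ + 1 - (Θ - 1) / (3 * Θ + 3) → Θ = Θs) :
    2.93 < (2 * Θs ^ 2 + 2 * Θs) / (Θs ^ 2 + Θs - 2) ∧
      (2 * Θs ^ 2 + 2 * Θs) / (Θs ^ 2 + Θs - 2) < 2.94 := by
  have hd1 : (0:ℝ) < Θs ^ 2 + Θs - 2 := by nlinarith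
  have hd2 : (0:ℝ) < 3 * Θs + 3 := by linarith
  have hpoly : 3 * Θs ^ 4 + 2 * Θs ^ 3 - 9 * Θs ^ 2 - 12 * Θs - 8 = 0 := by
    have h := heq
    rw [div_eq_iff (ne_of_gt hd1)] at h
    have hq0 : (Θs - 1) / (3 * Θs + 3) * (3 * Θs + 3) = Θs - 1 := div_mul_cancel₀ _ (ne_of_gt hd2)
    linear_combination (-(3 * Θs + 3)) * h + (Θs ^ 2 + Θs - 2) * hq0
  have hlo : 2.05 < Θs := by
    by_contra hc
    push_neg at hc
    nlinarith [mul_nonneg (mul_nonneg (by linarith : (0:ℝ) ≤ 2.05 - Θs) (by linarith : (0:ℝ) ≤ Θs - 1)) (by nlinarith : (0:ℝ) ≤ Θs ^ 2),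
      mul_nonneg (by linarith : (0:ℝ) ≤ 2.05 - Θs) (by linarith : (0:ℝ) ≤ Θs - 1),
      mul_nonneg (mul_nonneg (by linarith : (0:ℝ) ≤ 2.05 - Θs) (by linarith : (0:ℝ) ≤ Θs - 1)) (by linarith : (0:ℝ) ≤ Θs)]
  have hhi : Θs < 2.055 := by
    by_contra hc
    push_neg at hc
    nlinarith [mul_nonneg (mul_nonneg (by linarith : (0:ℝ) ≤ Θs - 2.055) (by linarith : (0:ℝ) ≤ Θs - 1)) (by nlinarith : (0:ℝ) ≤ Θs ^ 2),
      mul_nonneg (by linarith : (0:ℝ) ≤ Θs - 2.055) (by linarith : (0:ℝ) ≤ Θs - 1),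
      mul_nonneg (mul_nonneg (by linarith : (0:ℝ) ≤ Θs - 2.055) (by linarith : (0:ℝ) ≤ Θs - 1)) (by linarith : (0:ℝ) ≤ Θs)]
  rw [heq]
  set q : ℝ := (Θs - 1) / (3 * Θs + 3) with hq
  have hqm : q * (3 * Θs + 3) = Θs - 1 := div_mul_cancel₀ _ (ne_of_gt hd2)
  constructor
  · nlinarith
  · nlinarith
end
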